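/- Let L ⊆ ℤ be a ⟨ℤ;+⟩-recognizable set with L ≠ ∅ and L ≠ ℤ, and let k ≥ 1 be the smallest positive integer such that L = F + kℤ for some F ⊆ {0, …, k−1}. Then the lattice 𝓛₊(L) (closed under preimages of translations) and the lattice 𝓛₊ₓ(L) (closed under preimages of translations and of multiplications) coincide, and both are equal to the family { G + kℤ | G ⊆ {0, …, k−1} }. -/

import Mathlib

/-- `L ⊆ ℤ` is ⟨ℤ;+⟩-recognizable. -/
def RecognizableZ (L : Set ℤ) : Prop :=
  ∃ (M : Type) (_ : AddMonoid M) (_ : Finite M) (φ : ℤ →+ M),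
    Function.Surjective φ ∧ ∃ T : Set M, L = φ ⁻¹' T

/-- Membership in `𝓛₊(L)`: the smallest family of subsets of ℤ containing `L`, closed under
binary union, binary intersection and preimages of translations. -/
inductive LatPlusZ (L : Set ℤ) : Set ℤ → Prop
  | base : LatPlusZ L L
  | union {X Y : Set ℤ} : LatPlusZ L X → LatPlusZ L Y → LatPlusZ L (X ∪ Y)
  | inter {X Y : Set ℤ} : LatPlusZ L X → LatPlusZ L Y → LatPlusZ L (X ∩ Y)
  | shift {X : Set ℤ} (a : ℤ) : LatPlusZ L X → LatPlusZ L {x | x + a ∈ X}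

/-- Membership in `𝓛₊ₓ(L)`: the smallest family of subsets of ℤ containing `L`, closed under
binary union, binary intersection, preimages of translations and preimages of multiplications. -/
inductive LatPlusMulZ (L : Set ℤ) : Set ℤ → Prop
  | base : LatPlusMulZ L L
  | union {X Y : Set ℤ} : LatPlusMulZ L X → LatPlusMulZ L Y → LatPlusMulZ L (X ∪ Y)
  | inter {X Y : Set ℤ} : LatPlusMulZ L X → LatPlusMulZ L Y → LatPlusMulZ L (X ∩ Y)
  | shift {X : Set ℤ} (a : ℤ) : LatPlusMulZ L X → LatPlusMulZ L {x | x + a ∈ X}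
  | div {X : Set ℤ} (a : ℤ) : LatPlusMulZ L X → LatPlusMulZ L {x | a * x ∈ X}

/-- `L = F + kℤ` for some `F ⊆ {0,…,k−1}`. -/
def IsUnionOfClassesMod (k : ℕ) (L : Set ℤ) : Prop :=
  ∃ F : Set ℤ, F ⊆ {x | 0 ≤ x ∧ x < (k : ℤ)} ∧
    L = {m | ∃ f ∈ F, ∃ z : ℤ, m = f + (k : ℤ) * z}

def QQ (k : ℕ) (S : Set ℤ) : Prop := ∀ x y : ℤ, (k : ℤ) ∣ x - y → (x ∈ S ↔ y ∈ S)

lemma isUnion_iff_QQ {k : ℕ} (hk : 1 ≤ k) (S : Set ℤ) :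
    IsUnionOfClassesMod k S ↔ QQ k S := by
  constructor
  · rintro ⟨F, hF, rfl⟩ x y ⟨c, hc⟩
    constructor
    · rintro ⟨f, hf, z, rfl⟩
      exact ⟨f, hf, z - c, by linarith [hc]⟩
    · rintro ⟨f, hf, z, hz⟩
      exact ⟨f, hf, z + c, by linarith [hc]⟩
  · intro h
    have hkpos : (0 : ℤ) < (k : ℤ) := by exact_mod_cast hk
    refine ⟨S ∩ {x | 0 ≤ x ∧ x < (k : ℤ)}, Set.inter_subset_right, ?_⟩
    ext m
    constructor
    · intro hm
      have hmod := Int.emod_add_mul_ediv m (k : ℤ)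
      refine ⟨m % (k : ℤ), ⟨?_, Int.emod_nonneg m (by positivity), Int.emod_lt_of_pos m hkpos⟩,
        m / (k : ℤ), by linarith⟩
      exact (h m (m % (k : ℤ)) ⟨m / (k : ℤ), by linarith⟩).mp hm
    · rintro ⟨f, ⟨hfS, _, _⟩, z, rfl⟩
      exact (h f (f + (k : ℤ) * z) ⟨-z, by ring⟩).mp hfS

lemma latZ_toMul {L S : Set ℤ} (h : LatPlusZ L S) : LatPlusMulZ L S := by
  induction h with
  | base => exact .base
  | union _ _ h1 h2 => exact .union h1 h2
  | inter _ _ h1 h2 => exact .inter h1 h2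
  | shift a _ h => exact .shift a h

lemma latMul_QQ {L S : Set ℤ} {k : ℕ} (hL : QQ k L) (h : LatPlusMulZ L S) : QQ k S := by
  induction h with
  | base => exact hL
  | union _ _ h1 h2 =>
    intro x y hxy
    simp only [Set.mem_union]
    rw [h1 x y hxy, h2 x y hxy]
  | inter _ _ h1 h2 =>
    intro x y hxy
    simp only [Set.mem_inter_iff]
    rw [h1 x y hxy, h2 x y hxy]
  | shift a _ h1 =>
    intro x y hxy
    exact h1 (x + a) (y + a) (by rw [show x + a - (y + a) = x - y by ring]; exact hxy)
  | div a _ h1 =>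
    intro x y hxy
    exact h1 (a * x) (a * y) (by rw [show a * x - a * y = a * (x - y) by ring]; exact hxy.mul_left a)

lemma latPlus_biInter {L : Set ℤ} {ι : Type} (f : ι → Set ℤ) (s : Finset ι)
    (hs : s.Nonempty) : (∀ d ∈ s, LatPlusZ L (f d)) → LatPlusZ L (⋂ d ∈ s, f d) := by
  induction hs using Finset.Nonempty.cons_induction with
  | singleton a => intro h; simpa using h a (by simp)
  | cons a s ha hs ih =>
    intro h
    classical
    rw [Finset.cons_eq_insert, Finset.set_biInter_insert]
    exact .inter (h a (by simp)) (ih (fun d hd => h d (by simp [hd])))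

lemma latPlus_biUnion {L : Set ℤ} {ι : Type} (f : ι → Set ℤ) (s : Finset ι)
    (hs : s.Nonempty) : (∀ d ∈ s, LatPlusZ L (f d)) → LatPlusZ L (⋃ d ∈ s, f d) := by
  induction hs using Finset.Nonempty.cons_induction with
  | singleton a => intro h; simpa using h a (by simp)
  | cons a s ha hs ih =>
    intro h
    classical
    rw [Finset.cons_eq_insert, Finset.set_biUnion_insert]
    exact .union (h a (by simp)) (ih (fun d hd => h d (by simp [hd])))

lemma key_lemma {k : ℕ} [NeZero k] {L : Set ℤ} (F' : Set (ZMod k))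
    (hL : ∀ x : ℤ, x ∈ L ↔ (x : ZMod k) ∈ F')
    (hmin : ∀ k' : ℕ, 1 ≤ k' → IsUnionOfClassesMod k' L → k ≤ k')
    (d : ZMod k) (hd : d ≠ 0) : ∃ t ∈ F', t + d ∉ F' := by
  classical
  by_contra hcon
  push_neg at hcon
  have hfin : F'.Finite := Set.toFinite F'
  have hstep : ∀ t : ZMod k, t ∈ F' ↔ t + d ∈ F' := by
    intro t
    constructor
    · exact hcon t
    · intro ht
      have himg : hfin.toFinset.image (· + d) ⊆ hfin.toFinset := by
        intro x hx
        simp only [Finset.mem_image, Set.Finite.mem_toFinset] at hx ⊢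
        obtain ⟨s, hs, rfl⟩ := hx
        exact hcon s hs
      have hcard : hfin.toFinset.card ≤ (hfin.toFinset.image (· + d)).card :=
        (Finset.card_image_of_injective _ (add_left_injective d)).ge
      have heq := Finset.eq_of_subset_of_card_le himg hcard
      have hmem : t + d ∈ hfin.toFinset.image (· + d) := by
        rw [heq]
        simpa [Set.Finite.mem_toFinset] using ht
      simp only [Finset.mem_image, Set.Finite.mem_toFinset] at hmem
      obtain ⟨s, hs, hsd⟩ := hmem
      have hst : s = t := add_right_cancel hsd
      exact hst ▸ hs
  set a : ℤ := (d.val : ℤ) with ha_def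
  have had : ((a : ℤ) : ZMod k) = d := by
    rw [ha_def]
    push_cast
    exact ZMod.natCast_rightInverse d
  have hane : d.val ≠ 0 := fun h => hd ((ZMod.val_eq_zero d).mp h)
  have hapos : 0 < a := by
    rw [ha_def]; exact_mod_cast Nat.pos_of_ne_zero hane
  have haltk : a < (k : ℤ) := by
    rw [ha_def]; exact_mod_cast ZMod.val_lt d
  set g : ℕ := Int.gcd a (k : ℤ) with hg_def
  have hane' : a ≠ 0 := ne_of_gt hapos
  have hg1 : 1 ≤ g := Nat.pos_of_ne_zero (fun h => hane' (Int.gcd_eq_zero_iff.mp h).1)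
  have hgdvd : (g : ℤ) ∣ a := Int.gcd_dvd_left a (k : ℤ)
  have hgltk : (g : ℤ) < (k : ℤ) := lt_of_le_of_lt (Int.le_of_dvd hapos hgdvd) haltk
  set u : ℤ := Int.gcdA a (k : ℤ) with hu_def
  set v : ℤ := Int.gcdB a (k : ℤ) with hv_def
  have hbez : (g : ℤ) = a * u + (k : ℤ) * v := Int.gcd_eq_gcd_ab a (k : ℤ)
  have hiterN : ∀ (n : ℕ) (t : ZMod k), t ∈ F' ↔ t + (n : ZMod k) * d ∈ F' := by
    intro n
    induction n with
    | zero => intro t; simp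
    | succ n ih =>
      intro t
      have he : t + ((n + 1 : ℕ) : ZMod k) * d = (t + (n : ZMod k) * d) + d := by
        push_cast; ring
      rw [he, ← hstep]
      exact ih t
  have hiter : ∀ (c : ℤ) (t : ZMod k), t ∈ F' ↔ t + (c : ZMod k) * d ∈ F' := by
    intro c t
    rcases le_or_gt 0 c with h0 | h0
    · lift c to ℕ using h0
      rw [Int.cast_natCast]
      exact hiterN c t
    · have hn : ((c.natAbs : ℤ)) = -c := by omega
      have h1 := hiterN c.natAbs (t + (c : ZMod k) * d)
      have h2 : (t + (c : ZMod k) * d) + (c.natAbs : ZMod k) * d = t := by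
        have h3 : ((c.natAbs : ℕ) : ZMod k) = -((c : ℤ) : ZMod k) := by
          rw [← Int.cast_natCast (R := ZMod k), hn, Int.cast_neg]
        rw [h3]; ring
      rw [h2] at h1
      exact h1.symm
  have hQg : QQ g L := by
    rintro x y ⟨m, hm⟩
    rw [hL x, hL y]
    have hx : (x : ZMod k) = (y : ZMod k) + ((u * m : ℤ) : ZMod k) * d := by
      have hxy : x = y + (a * u + (k : ℤ) * v) * m := by rw [← hbez]; linarith
      rw [hxy]
      push_cast [ZMod.natCast_self]
      rw [had]
      ring
    rw [hx]
    exact (hiter (u * m) _).symm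
  have hU : IsUnionOfClassesMod g L := (isUnion_iff_QQ hg1 L).mpr hQg
  have := hmin g hg1 hU
  have : (k : ℤ) ≤ (g : ℤ) := by exact_mod_cast this
  omega

lemma backward_lemma {k : ℕ} [NeZero k] {L : Set ℤ} (hk2 : 2 ≤ k) (F' : Set (ZMod k))
    (hL : ∀ x : ℤ, x ∈ L ↔ (x : ZMod k) ∈ F')
    (hFne : F'.Nonempty)
    (hkey : ∀ d : ZMod k, d ≠ 0 → ∃ t ∈ F', t + d ∉ F')
    {S : Set ℤ} (hS : QQ k S) : LatPlusZ L S := by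
  classical
  have hT : ∀ d : ZMod k, LatPlusZ L {x : ℤ | (x : ZMod k) + d ∈ F'} := by
    intro d
    have h0 : {x : ℤ | (x : ZMod k) + d ∈ F'} = {x : ℤ | x + (d.val : ℤ) ∈ L} := by
      ext x
      simp only [Set.mem_setOf_eq, hL]
      have he : ((x + (d.val : ℤ) : ℤ) : ZMod k) = (x : ZMod k) + d := by
        push_cast
        rw [ZMod.natCast_rightInverse d]
      rw [he]
    rw [h0]
    exact .shift _ .base
  have hC : ∀ r : ZMod k, LatPlusZ L {x : ℤ | (x : ZMod k) = r} := by
    intro r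
    set D : Finset (ZMod k) := Finset.univ.filter (fun d => r + d ∈ F') with hD
    obtain ⟨f0, hf0⟩ := hFne
    have hDne : D.Nonempty := by
      refine ⟨f0 - r, ?_⟩
      simp only [hD, Finset.mem_filter, Finset.mem_univ, true_and]
      have : r + (f0 - r) = f0 := by ring
      rwa [this]
    have heq : {x : ℤ | (x : ZMod k) = r} = ⋂ d ∈ D, {x : ℤ | (x : ZMod k) + d ∈ F'} := by
      ext x
      simp only [Set.mem_setOf_eq, Set.mem_iInter, hD, Finset.mem_filter, Finset.mem_univ,
        true_and]
      constructor
      · rintro rfl d hd; exact hd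
      · intro h
        by_contra hne'
        obtain ⟨t, ht, htd⟩ := hkey ((x : ZMod k) - r) (sub_ne_zero.mpr hne')
        apply htd
        have h1 := h (t - r) (by rw [show r + (t - r) = t by ring]; exact ht)
        rwa [show t + ((x : ZMod k) - r) = (x : ZMod k) + (t - r) by ring]
    rw [heq]
    exact latPlus_biInter _ D hDne (fun d _ => hT d)
  have h01 : (0 : ZMod k) ≠ 1 := by
    intro h
    have : ((1 : ℕ) : ZMod k) = 0 := by
      push_cast
      exact h.symm
    rw [ZMod.natCast_eq_zero_iff] at this
    have := Nat.le_of_dvd one_pos this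
    omega
  have hEmpty : LatPlusZ L (∅ : Set ℤ) := by
    have he : (∅ : Set ℤ) = {x : ℤ | (x : ZMod k) = 0} ∩ {x : ℤ | (x : ZMod k) = 1} := by
      ext x
      simp only [Set.mem_empty_iff_false, Set.mem_inter_iff, Set.mem_setOf_eq, false_iff]
      rintro ⟨h0, h1⟩
      exact h01 (h0.symm.trans h1)
    rw [he]
    exact .inter (hC 0) (hC 1)
  rcases Set.eq_empty_or_nonempty S with rfl | ⟨x0, hx0⟩
  · exact hEmpty
  · have hSc : ∀ x y : ℤ, (x : ZMod k) = (y : ZMod k) → (x ∈ S ↔ y ∈ S) := by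
      intro x y hxy
      apply hS
      have h2 : x ≡ y [ZMOD (k : ℕ)] := (ZMod.intCast_eq_intCast_iff _ _ _).mp hxy
      exact dvd_sub_comm.mp (Int.ModEq.dvd h2)
    set R : Finset (ZMod k) := Finset.univ.filter (fun r => ∃ x : ℤ, (x : ZMod k) = r ∧ x ∈ S)
      with hR
    have hRne : R.Nonempty := by
      refine ⟨(x0 : ZMod k), ?_⟩
      simp only [hR, Finset.mem_filter, Finset.mem_univ, true_and]
      exact ⟨x0, rfl, hx0⟩
    have heq : S = ⋃ r ∈ R, {x : ℤ | (x : ZMod k) = r} := by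
      ext x
      simp only [Set.mem_iUnion, Set.mem_setOf_eq, hR, Finset.mem_filter, Finset.mem_univ,
        true_and]
      constructor
      · intro hx
        exact ⟨(x : ZMod k), ⟨x, rfl, hx⟩, rfl⟩
      · rintro ⟨r, ⟨y, hy, hyS⟩, rfl⟩
        exact (hSc x y (hy.symm ▸ rfl)).mpr hyS
    rw [heq]
    exact latPlus_biUnion _ R hRne (fun r _ => hC r)


theorem stmt15 (L : Set ℤ) (hrec : RecognizableZ L)
    (hne : L ≠ ∅) (hnuniv : L ≠ Set.univ)
    (k : ℕ) (hk : 1 ≤ k) (hkL : IsUnionOfClassesMod k L)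
    (hmin : ∀ k' : ℕ, 1 ≤ k' → IsUnionOfClassesMod k' L → k ≤ k') :
    (∀ S : Set ℤ, LatPlusZ L S ↔ IsUnionOfClassesMod k S) ∧
    (∀ S : Set ℤ, LatPlusMulZ L S ↔ IsUnionOfClassesMod k S) := by
  obtain ⟨F0, hF0sub, hF0⟩ := hkL
  have hk2 : 2 ≤ k := by
    by_contra h
    have hk1 : k = 1 := by omega
    subst hk1
    by_cases h0 : (0 : ℤ) ∈ F0
    · apply hnuniv
      rw [hF0]
      ext m
      simp only [Set.mem_setOf_eq, Set.mem_univ, iff_true]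
      exact ⟨0, h0, m, by push_cast; ring⟩
    · apply hne
      rw [hF0]
      ext m
      simp only [Set.mem_setOf_eq, Set.mem_empty_iff_false, iff_false]
      rintro ⟨f, hf, z, rfl⟩
      have hb := hF0sub hf
      simp only [Set.mem_setOf_eq, Nat.cast_one] at hb
      have hf0 : f = 0 := by omega
      exact h0 (hf0 ▸ hf)
  haveI : NeZero k := ⟨by omega⟩
  set F' : Set (ZMod k) := (fun x : ℤ => (x : ZMod k)) '' F0 with hF'
  have hL : ∀ x : ℤ, x ∈ L ↔ (x : ZMod k) ∈ F' := by
    intro x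
    rw [hF0, hF']
    simp only [Set.mem_setOf_eq, Set.mem_image]
    constructor
    · rintro ⟨f, hf, z, rfl⟩
      refine ⟨f, hf, ?_⟩
      push_cast [ZMod.natCast_self]
      ring
    · rintro ⟨f, hf, hfx⟩
      have hd : (k : ℤ) ∣ x - f := by
        rw [← ZMod.intCast_zmod_eq_zero_iff_dvd]
        push_cast
        rw [hfx]
        ring
      obtain ⟨z, hz⟩ := hd
      exact ⟨f, hf, z, by linarith⟩
  have hFne : F'.Nonempty := by
    obtain ⟨x, hx⟩ := Set.nonempty_iff_ne_empty.mpr hne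
    exact ⟨(x : ZMod k), (hL x).mp hx⟩
  have hkey : ∀ d : ZMod k, d ≠ 0 → ∃ t ∈ F', t + d ∉ F' := key_lemma F' hL hmin
  have hQL : QQ k L := (isUnion_iff_QQ hk L).mp ⟨F0, hF0sub, hF0⟩
  constructor
  · intro S
    constructor
    · intro h
      exact (isUnion_iff_QQ hk S).mpr (latMul_QQ hQL (latZ_toMul h))
    · intro h
      exact backward_lemma hk2 F' hL hFne hkey ((isUnion_iff_QQ hk S).mp h)
  · intro S
    constructor
    · intro h
      exact (isUnion_iff_QQ hk S).mpr (latMul_QQ hQL h)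
    · intro h
      exact latZ_toMul (backward_lemma hk2 F' hL hFne hkey ((isUnion_iff_QQ hk S).mp h))
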